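/- In the KLR algebra R(n), the intertwiner φ_a (defined as φ_a e(ν) = ((x_a − x_{a+1})τ_a + 1)e(ν) if ν_a = ν_{a+1} and φ_a e(ν) = τ_a e(ν) otherwise) satisfies φ_a² = Q_{a,a+1} + e_{a,a+1}, where Q_{a,a+1} = Σ_ν Q_{ν_a,ν_{a+1}}(x_a, x_{a+1}) e(ν). -/

import Mathlib

open scoped BigOperators

/-- Generators of the Khovanov–Lauda–Rouquier algebra `R(n)`:
idempotents `e(ν)` for `ν ∈ Iⁿ`, polynomial generators `x_a` (`1 ≤ a ≤ n`) and
intertwining generators `τ_l` (`1 ≤ l ≤ n−1`). -/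
inductive KLRGen (I : Type) (n : ℕ) : Type where
  | e : (Fin n → I) → KLRGen I n
  | x : Fin n → KLRGen I n
  | t : Fin (n - 1) → KLRGen I n

/-- The free algebra on the KLR generators. -/
abbrev KLRFree (k I : Type) [CommRing k] (n : ℕ) := FreeAlgebra k (KLRGen I n)

/-- The generator `e(ν)` in the free algebra. -/
def KE (k : Type) [CommRing k] {I : Type} {n : ℕ} (ν : Fin n → I) : KLRFree k I n :=
  FreeAlgebra.ι k (KLRGen.e ν)

/-- The generator `x_a` in the free algebra. -/
def KX (k : Type) [CommRing k] {I : Type} {n : ℕ} (a : Fin n) : KLRFree k I n :=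
  FreeAlgebra.ι k (KLRGen.x a)

/-- The generator `τ_l` in the free algebra. -/
def KT (k : Type) [CommRing k] {I : Type} {n : ℕ} (l : Fin (n - 1)) : KLRFree k I n :=
  FreeAlgebra.ι k (KLRGen.t l)

/-- The position `l` regarded in `Fin n`. -/
def posL {n : ℕ} (l : Fin (n - 1)) : Fin n := ⟨l.val, by have := l.isLt; omega⟩

/-- The position `l + 1` regarded in `Fin n`. -/
def posR {n : ℕ} (l : Fin (n - 1)) : Fin n := ⟨l.val + 1, by have := l.isLt; omega⟩

/-- Evaluation of a two-variable polynomial `q ∈ k[u][v]` (outer variable `u`,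
inner variable `v`) at a pair of elements of a `k`-algebra `A`:
`evalQ q a b = q(a, b)`. -/
noncomputable def evalQ {k A : Type} [CommRing k] [Ring A] [Algebra k A]
    (q : Polynomial (Polynomial k)) (u v : A) : A :=
  Polynomial.eval u (q.map (Polynomial.aeval v).toRingHom)

/-- The two-variable "divided difference" `(q(u,v) − q(w,v))/(u − w)` of a polynomial
`q ∈ k[u][v]`, evaluated at elements `u, w, v` of a `k`-algebra `A`. -/
noncomputable def QbarE {k A : Type} [CommRing k] [Ring A] [Algebra k A]
    (q : Polynomial (Polynomial k)) (u w v : A) : A :=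
  ∑ p ∈ q.support, (∑ i ∈ Finset.range p, u ^ i * w ^ (p - 1 - i)) *
    Polynomial.aeval v (q.coeff p)

/-- The defining relations of the Khovanov–Lauda–Rouquier algebra `R(n)` associated with
the family of polynomials `Q = (Q_{ij}(u,v))_{i,j ∈ I}` (Khovanov–Lauda, Rouquier). -/
inductive KLRRel (k I : Type) [CommRing k] [Fintype I] [DecidableEq I] (n : ℕ)
    (Q : I → I → Polynomial (Polynomial k)) :
    KLRFree k I n → KLRFree k I n → Prop where
  | ee (ν ν' : Fin n → I) :
      KLRRel k I n Q (KE k ν * KE k ν') (if ν = ν' then KE k ν else 0)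
  | esum :
      KLRRel k I n Q (∑ ν : Fin n → I, KE k ν) 1
  | xx (a b : Fin n) :
      KLRRel k I n Q (KX k a * KX k b) (KX k b * KX k a)
  | xe (a : Fin n) (ν : Fin n → I) :
      KLRRel k I n Q (KX k a * KE k ν) (KE k ν * KX k a)
  | te (l : Fin (n - 1)) (ν : Fin n → I) :
      KLRRel k I n Q (KT k l * KE k ν)
        (KE k (ν ∘ Equiv.swap (posL l) (posR l)) * KT k l)
  | tt (l m : Fin (n - 1)) (h : l.val + 1 < m.val ∨ m.val + 1 < l.val) :
      KLRRel k I n Q (KT k l * KT k m) (KT k m * KT k l)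
  | tsq (l : Fin (n - 1)) (ν : Fin n → I) :
      KLRRel k I n Q (KT k l * KT k l * KE k ν)
        (evalQ (Q (ν (posL l)) (ν (posR l))) (KX k (posL l)) (KX k (posR l)) * KE k ν)
  | txe (l : Fin (n - 1)) (b : Fin n) (ν : Fin n → I) :
      KLRRel k I n Q
        (KT k l * KX k b * KE k ν - KX k (Equiv.swap (posL l) (posR l) b) * KT k l * KE k ν)
        (if ν (posL l) = ν (posR l) then
          (if b = posL l then -(KE k ν) else if b = posR l then KE k ν else 0)
        else 0)
  | braid (l m : Fin (n - 1)) (hm : m.val = l.val + 1) (ν : Fin n → I) :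
      KLRRel k I n Q
        (KT k m * KT k l * KT k m * KE k ν - KT k l * KT k m * KT k l * KE k ν)
        (if ν (posL l) = ν (posR m) then
          QbarE (Q (ν (posL l)) (ν (posR l))) (KX k (posL l)) (KX k (posR m)) (KX k (posR l))
            * KE k ν
        else 0)

/-- The Khovanov–Lauda–Rouquier algebra `R(n)` over `k` associated with the Cartan datum
indexed by `I` and the polynomials `Q_{ij}`. -/
abbrev KLR (k I : Type) [CommRing k] [Fintype I] [DecidableEq I] (n : ℕ)
    (Q : I → I → Polynomial (Polynomial k)) := RingQuot (KLRRel k I n Q)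

/-- The idempotent `e(ν)` in `R(n)`. -/
noncomputable def KLR.E (k I : Type) [CommRing k] [Fintype I] [DecidableEq I] (n : ℕ)
    (Q : I → I → Polynomial (Polynomial k)) (ν : Fin n → I) : KLR k I n Q :=
  RingQuot.mkAlgHom k (KLRRel k I n Q) (KE k ν)

/-- The element `x_a` in `R(n)`. -/
noncomputable def KLR.X (k I : Type) [CommRing k] [Fintype I] [DecidableEq I] (n : ℕ)
    (Q : I → I → Polynomial (Polynomial k)) (a : Fin n) : KLR k I n Q :=
  RingQuot.mkAlgHom k (KLRRel k I n Q) (KX k a)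

/-- The element `τ_l` in `R(n)`. -/
noncomputable def KLR.T (k I : Type) [CommRing k] [Fintype I] [DecidableEq I] (n : ℕ)
    (Q : I → I → Polynomial (Polynomial k)) (l : Fin (n - 1)) : KLR k I n Q :=
  RingQuot.mkAlgHom k (KLRRel k I n Q) (KT k l)

/-- The intertwiner `φ_a` of the KLR algebra, defined by
`φ_a e(ν) = ((x_a − x_{a+1})τ_a + 1) e(ν)` if `ν_a = ν_{a+1}` and
`φ_a e(ν) = τ_a e(ν)` otherwise. -/
noncomputable def KLR.phi (k I : Type) [CommRing k] [Fintype I] [DecidableEq I] (n : ℕ)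
    (Q : I → I → Polynomial (Polynomial k)) (l : Fin (n - 1)) : KLR k I n Q :=
  ∑ ν : Fin n → I,
    (if ν (posL l) = ν (posR l) then
        (KLR.X k I n Q (posL l) - KLR.X k I n Q (posR l)) * KLR.T k I n Q l + 1
      else KLR.T k I n Q l) * KLR.E k I n Q ν

section EvalQHelpers

lemma evalQ_zero' {k A : Type} [CommRing k] [Ring A] [Algebra k A] (u v : A) :
    evalQ (0 : Polynomial (Polynomial k)) u v = 0 := by simp [evalQ]

lemma evalQ_algHom {k A B : Type} [CommRing k] [Ring A] [Ring B] [Algebra k A] [Algebra k B]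
    (f : A →ₐ[k] B) (q : Polynomial (Polynomial k)) (u v : A) :
    f (evalQ q u v) = evalQ q (f u) (f v) := by
  unfold evalQ
  rw [Polynomial.eval_map, Polynomial.eval_map]
  have h := Polynomial.hom_eval₂ (p := q) (f := (Polynomial.aeval v).toRingHom)
    (g := f.toRingHom) u
  have hc : (f.toRingHom).comp (Polynomial.aeval v).toRingHom
      = (Polynomial.aeval (f v)).toRingHom :=
    RingHom.ext fun p => (Polynomial.aeval_algHom_apply f v p).symm
  rw [hc] at h; exact h

end EvalQHelpers

section RingHelpers

lemma move_helper {A : Type} [Ring A] (e e' m t x y : A)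
    (het : e * t = t * e') (hex : e * x = x * e) (hey : e * y = y * e) :
    e * (((x - y) * t + 1) * m) = (x - y) * (t * (e' * m)) + e * m := by
  calc e * (((x - y) * t + 1) * m)
      = (e * x - e * y) * (t * m) + e * m := by noncomm_ring
    _ = (x * e - y * e) * (t * m) + e * m := by rw [hex, hey]
    _ = x * ((e * t) * m) - y * ((e * t) * m) + e * m := by noncomm_ring
    _ = x * ((t * e') * m) - y * ((t * e') * m) + e * m := by rw [het]
    _ = (x - y) * (t * (e' * m)) + e * m := by noncomm_ring

lemma sq_helper {A : Type} [Ring A] (e t x y : A)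
    (het : e * t = t * e)
    (htt : t * (t * e) = 0)
    (htx : t * (x * e) = y * (t * e) - e)
    (hty : t * (y * e) = x * (t * e) + e) :
    ((x - y) * t + 1) * (((x - y) * t + 1) * e) = e := by
  have key : ∀ z w : A, t * (z * e) = w → t * (z * (t * e)) = w * t := by
    intro z w hz
    calc t * (z * (t * e)) = (t * (z * e)) * t := by rw [← het]; noncomm_ring
      _ = w * t := by rw [hz]
  have h1 : t * (x * (t * e)) = -(t * e) := by
    rw [key x (y * (t * e) - e) htx]
    calc (y * (t * e) - e) * t = y * (t * (e * t)) - e * t := by noncomm_ring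
      _ = y * (t * (t * e)) - t * e := by rw [het]
      _ = -(t * e) := by rw [htt, mul_zero, zero_sub]
  have h2 : t * (y * (t * e)) = t * e := by
    rw [key y (x * (t * e) + e) hty]
    calc (x * (t * e) + e) * t = x * (t * (e * t)) + e * t := by noncomm_ring
      _ = x * (t * (t * e)) + t * e := by rw [het]
      _ = t * e := by rw [htt, mul_zero, zero_add]
  have h3 : t * ((x - y) * (t * e)) = -(t * e) - t * e := by
    have h : (x - y) * (t * e) = x * (t * e) - y * (t * e) := by noncomm_ring
    rw [h, mul_sub, h1, h2]
  calc ((x - y) * t + 1) * (((x - y) * t + 1) * e)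
      = (x - y) * (t * ((x - y) * (t * e))) + ((x - y) * (t * e) + ((x - y) * (t * e) + e)) := by
        noncomm_ring
    _ = e := by rw [h3]; noncomm_ring

end RingHelpers

section SwapHelpers

lemma posL_ne_posR {n : ℕ} (l : Fin (n - 1)) : posL l ≠ posR l := by
  simp [posL, posR, Fin.ext_iff]

lemma posR_ne_posL {n : ℕ} (l : Fin (n - 1)) : posR l ≠ posL l :=
  (posL_ne_posR l).symm

lemma comp_swap_comp_swap {I : Type} {n : ℕ} (ν : Fin n → I) (a b : Fin n) :
    (ν ∘ Equiv.swap a b) ∘ Equiv.swap a b = ν := by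
  funext x
  simp [Function.comp, Equiv.swap_apply_self]

lemma comp_swap_eq_self {I : Type} {n : ℕ} {ν : Fin n → I} (l : Fin (n - 1))
    (h : ν (posL l) = ν (posR l)) :
    ν ∘ Equiv.swap (posL l) (posR l) = ν := by
  funext x
  by_cases hx : x = posL l
  · simp [hx, Equiv.swap_apply_left, h]
  by_cases hx' : x = posR l
  · simp [hx', Equiv.swap_apply_right, h]
  · simp [Function.comp, Equiv.swap_apply_of_ne_of_ne hx hx']

lemma comp_swap_posL {I : Type} {n : ℕ} (ν : Fin n → I) (l : Fin (n - 1)) :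
    (ν ∘ Equiv.swap (posL l) (posR l)) (posL l) = ν (posR l) := by
  simp [Function.comp, Equiv.swap_apply_left]

lemma comp_swap_posR {I : Type} {n : ℕ} (ν : Fin n → I) (l : Fin (n - 1)) :
    (ν ∘ Equiv.swap (posL l) (posR l)) (posR l) = ν (posL l) := by
  simp [Function.comp, Equiv.swap_apply_right]

/-- The involution `ν ↦ ν ∘ s_l` on `Iⁿ`. -/
def swapEquiv {I : Type} {n : ℕ} (l : Fin (n - 1)) : (Fin n → I) ≃ (Fin n → I) where
  toFun ν := ν ∘ Equiv.swap (posL l) (posR l)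
  invFun ν := ν ∘ Equiv.swap (posL l) (posR l)
  left_inv ν := comp_swap_comp_swap ν _ _
  right_inv ν := comp_swap_comp_swap ν _ _

end SwapHelpers

section QuotLemmas

variable {k I : Type} [CommRing k] [Fintype I] [DecidableEq I] {n : ℕ}
variable (Q : I → I → Polynomial (Polynomial k))

lemma qEE (ν ν' : Fin n → I) :
    KLR.E k I n Q ν * KLR.E k I n Q ν' = if ν = ν' then KLR.E k I n Q ν else 0 := by
  have h := RingQuot.mkAlgHom_rel k (KLRRel.ee (k := k) (I := I) (n := n) (Q := Q) ν ν')
  rw [map_mul, apply_ite (RingQuot.mkAlgHom k (KLRRel k I n Q)), map_zero] at h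
  exact h

lemma qXE (b : Fin n) (ν : Fin n → I) :
    KLR.X k I n Q b * KLR.E k I n Q ν = KLR.E k I n Q ν * KLR.X k I n Q b := by
  have h := RingQuot.mkAlgHom_rel k (KLRRel.xe (k := k) (I := I) (n := n) (Q := Q) b ν)
  rw [map_mul, map_mul] at h
  exact h

lemma qEX (b : Fin n) (ν : Fin n → I) :
    KLR.E k I n Q ν * KLR.X k I n Q b = KLR.X k I n Q b * KLR.E k I n Q ν :=
  (qXE Q b ν).symm

lemma qTE (l : Fin (n - 1)) (ν : Fin n → I) :
    KLR.T k I n Q l * KLR.E k I n Q ν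
      = KLR.E k I n Q (ν ∘ Equiv.swap (posL l) (posR l)) * KLR.T k I n Q l := by
  have h := RingQuot.mkAlgHom_rel k (KLRRel.te (k := k) (I := I) (n := n) (Q := Q) l ν)
  rw [map_mul, map_mul] at h
  exact h

lemma qET (l : Fin (n - 1)) (ν : Fin n → I) :
    KLR.E k I n Q ν * KLR.T k I n Q l
      = KLR.T k I n Q l * KLR.E k I n Q (ν ∘ Equiv.swap (posL l) (posR l)) := by
  have h := qTE Q l (ν ∘ Equiv.swap (posL l) (posR l))
  rw [comp_swap_comp_swap] at h
  exact h.symm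

lemma qTT (l : Fin (n - 1)) (ν : Fin n → I) :
    KLR.T k I n Q l * (KLR.T k I n Q l * KLR.E k I n Q ν)
      = evalQ (Q (ν (posL l)) (ν (posR l))) (KLR.X k I n Q (posL l)) (KLR.X k I n Q (posR l))
          * KLR.E k I n Q ν := by
  have h := RingQuot.mkAlgHom_rel k (KLRRel.tsq (k := k) (I := I) (n := n) (Q := Q) l ν)
  rw [map_mul, map_mul, map_mul, evalQ_algHom] at h
  rw [← mul_assoc]
  exact h

lemma qTXE (l : Fin (n - 1)) (b : Fin n) (ν : Fin n → I) :
    KLR.T k I n Q l * KLR.X k I n Q b * KLR.E k I n Q ν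
      = KLR.X k I n Q (Equiv.swap (posL l) (posR l) b) * KLR.T k I n Q l * KLR.E k I n Q ν
        + (if ν (posL l) = ν (posR l) then
            (if b = posL l then -(KLR.E k I n Q ν)
             else if b = posR l then KLR.E k I n Q ν else 0)
          else 0) := by
  have h := RingQuot.mkAlgHom_rel k (KLRRel.txe (k := k) (I := I) (n := n) (Q := Q) l b ν)
  rw [map_sub, map_mul, map_mul, map_mul, map_mul,
    apply_ite (RingQuot.mkAlgHom k (KLRRel k I n Q)),
    apply_ite (RingQuot.mkAlgHom k (KLRRel k I n Q)),
    apply_ite (RingQuot.mkAlgHom k (KLRRel k I n Q)), map_neg, map_zero] at h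
  exact sub_eq_iff_eq_add'.mp h

lemma qTXL (l : Fin (n - 1)) (ν : Fin n → I) (hν : ν (posL l) = ν (posR l)) :
    KLR.T k I n Q l * (KLR.X k I n Q (posL l) * KLR.E k I n Q ν)
      = KLR.X k I n Q (posR l) * (KLR.T k I n Q l * KLR.E k I n Q ν) - KLR.E k I n Q ν := by
  have h := qTXE Q l (posL l) ν
  rw [if_pos hν, if_pos rfl, Equiv.swap_apply_left] at h
  calc KLR.T k I n Q l * (KLR.X k I n Q (posL l) * KLR.E k I n Q ν)
      = KLR.T k I n Q l * KLR.X k I n Q (posL l) * KLR.E k I n Q ν := by rw [mul_assoc]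
    _ = _ := by rw [h]; noncomm_ring

lemma qTXR (l : Fin (n - 1)) (ν : Fin n → I) (hν : ν (posL l) = ν (posR l)) :
    KLR.T k I n Q l * (KLR.X k I n Q (posR l) * KLR.E k I n Q ν)
      = KLR.X k I n Q (posL l) * (KLR.T k I n Q l * KLR.E k I n Q ν) + KLR.E k I n Q ν := by
  have h := qTXE Q l (posR l) ν
  rw [if_pos hν, if_neg (posR_ne_posL l), if_pos rfl, Equiv.swap_apply_right] at h
  calc KLR.T k I n Q l * (KLR.X k I n Q (posR l) * KLR.E k I n Q ν)
      = KLR.T k I n Q l * KLR.X k I n Q (posR l) * KLR.E k I n Q ν := by rw [mul_assoc]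
    _ = _ := by rw [h]; noncomm_ring

end QuotLemmas

/-- The coefficient of `e(ν)` in the intertwiner `φ_l`. -/
noncomputable def KLR.coefPhi (k I : Type) [CommRing k] [Fintype I] [DecidableEq I] (n : ℕ)
    (Q : I → I → Polynomial (Polynomial k)) (l : Fin (n - 1)) (ν : Fin n → I) : KLR k I n Q :=
  if ν (posL l) = ν (posR l) then
    (KLR.X k I n Q (posL l) - KLR.X k I n Q (posR l)) * KLR.T k I n Q l + 1
  else KLR.T k I n Q l

section MainLemmas

variable {k I : Type} [CommRing k] [Fintype I] [DecidableEq I] {n : ℕ}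
variable (Q : I → I → Polynomial (Polynomial k))

lemma phi_eq_sum (l : Fin (n - 1)) :
    KLR.phi k I n Q l = ∑ ν : Fin n → I, KLR.coefPhi k I n Q l ν * KLR.E k I n Q ν := rfl

lemma E_mul_coef_E (l : Fin (n - 1)) (ν μ : Fin n → I) :
    KLR.E k I n Q ν * (KLR.coefPhi k I n Q l μ * KLR.E k I n Q μ)
      = if ν ∘ Equiv.swap (posL l) (posR l) = μ then
          KLR.coefPhi k I n Q l μ * KLR.E k I n Q μ else 0 := by
  unfold KLR.coefPhi
  by_cases hμ : μ (posL l) = μ (posR l)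
  · rw [if_pos hμ, move_helper _ (KLR.E k I n Q (ν ∘ Equiv.swap (posL l) (posR l))) _ _ _ _
      (qET Q l ν) (qEX Q (posL l) ν) (qEX Q (posR l) ν), qEE, qEE]
    by_cases h : ν ∘ Equiv.swap (posL l) (posR l) = μ
    · have hνμ : ν = μ := by
        rw [← comp_swap_comp_swap ν (posL l) (posR l), h, comp_swap_eq_self l hμ]
      rw [if_pos h, if_pos hνμ, if_pos h, h, hνμ]
      noncomm_ring
    · have hνμ : ν ≠ μ := by
        intro he
        apply h
        rw [he]
        exact comp_swap_eq_self l hμ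
      rw [if_neg h, if_neg hνμ, if_neg h]
      noncomm_ring
  · rw [if_neg hμ, ← mul_assoc, qET Q l ν, mul_assoc, qEE]
    by_cases h : ν ∘ Equiv.swap (posL l) (posR l) = μ
    · rw [if_pos h, if_pos h, h]
    · rw [if_neg h, if_neg h, mul_zero]

lemma E_mul_phi (l : Fin (n - 1)) (ν : Fin n → I) :
    KLR.E k I n Q ν * KLR.phi k I n Q l
      = KLR.coefPhi k I n Q l (ν ∘ Equiv.swap (posL l) (posR l))
          * KLR.E k I n Q (ν ∘ Equiv.swap (posL l) (posR l)) := by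
  rw [phi_eq_sum, Finset.mul_sum]
  rw [Finset.sum_congr rfl fun μ _ => E_mul_coef_E Q l ν μ]
  rw [Finset.sum_ite_eq, if_pos (Finset.mem_univ _)]

end MainLemmas

section MainLemmas2

variable {k I : Type} [CommRing k] [Fintype I] [DecidableEq I] {n : ℕ}
variable (Q : I → I → Polynomial (Polynomial k))

lemma coef_mul_coef_E (hQdiag : ∀ i : I, Q i i = 0) (l : Fin (n - 1)) (ν : Fin n → I) :
    KLR.coefPhi k I n Q l ν
        * (KLR.coefPhi k I n Q l (ν ∘ Equiv.swap (posL l) (posR l))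
            * KLR.E k I n Q (ν ∘ Equiv.swap (posL l) (posR l)))
      = if ν (posL l) = ν (posR l) then KLR.E k I n Q ν
        else
          evalQ (Q ((ν ∘ Equiv.swap (posL l) (posR l)) (posL l))
              ((ν ∘ Equiv.swap (posL l) (posR l)) (posR l)))
            (KLR.X k I n Q (posL l)) (KLR.X k I n Q (posR l))
            * KLR.E k I n Q (ν ∘ Equiv.swap (posL l) (posR l)) := by
  by_cases hν : ν (posL l) = ν (posR l)
  · rw [if_pos hν, comp_swap_eq_self l hν]
    unfold KLR.coefPhi
    rw [if_pos hν]
    refine sq_helper (KLR.E k I n Q ν) (KLR.T k I n Q l)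
      (KLR.X k I n Q (posL l)) (KLR.X k I n Q (posR l)) ?_ ?_ ?_ ?_
    · have h := qET Q l ν
      rw [comp_swap_eq_self l hν] at h
      exact h
    · have h := qTT Q l ν
      rw [hν, hQdiag, evalQ_zero', zero_mul] at h
      exact h
    · exact qTXL Q l ν hν
    · exact qTXR Q l ν hν
  · have hν' : ¬ ((ν ∘ Equiv.swap (posL l) (posR l)) (posL l)
        = (ν ∘ Equiv.swap (posL l) (posR l)) (posR l)) := by
      rw [comp_swap_posL, comp_swap_posR]
      exact fun hh => hν hh.symm
    rw [if_neg hν]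
    unfold KLR.coefPhi
    rw [if_neg hν, if_neg hν']
    exact qTT Q l (ν ∘ Equiv.swap (posL l) (posR l))

end MainLemmas2
/-- **Square of the intertwiner.**  In the KLR algebra `R(n)`, the intertwiner `φ_a`
satisfies `φ_a² = Q_{a,a+1} + e_{a,a+1}`, where
`Q_{a,a+1} = Σ_ν Q_{ν_a,ν_{a+1}}(x_a, x_{a+1}) e(ν)` and
`e_{a,a+1} = Σ_{ν : ν_a = ν_{a+1}} e(ν)`.  Here `Q_{ii} = 0` and
`Q_{ij}(u,v) = Q_{ji}(v,u)`. -/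
theorem KLR.phi_sq
    (k I : Type) [CommRing k] [Fintype I] [DecidableEq I] (n : ℕ)
    (Q : I → I → Polynomial (Polynomial k))
    (hQdiag : ∀ i : I, Q i i = 0)
    (hQsymm : ∀ i j : I, Q i j
      = evalQ (A := Polynomial (Polynomial k)) (Q j i) (Polynomial.C Polynomial.X)
          Polynomial.X)
    (l : Fin (n - 1)) :
    KLR.phi k I n Q l * KLR.phi k I n Q l
      = (∑ ν : Fin n → I,
          evalQ (Q (ν (posL l)) (ν (posR l))) (KLR.X k I n Q (posL l))
            (KLR.X k I n Q (posR l)) * KLR.E k I n Q ν)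
        + (∑ ν : Fin n → I,
            if ν (posL l) = ν (posR l) then KLR.E k I n Q ν else 0) := by
  calc KLR.phi k I n Q l * KLR.phi k I n Q l
      = ∑ ν : Fin n → I,
          KLR.coefPhi k I n Q l ν * KLR.E k I n Q ν * KLR.phi k I n Q l := by
        nth_rw 1 [phi_eq_sum Q l]
        rw [Finset.sum_mul]
    _ = ∑ ν : Fin n → I,
          (if ν (posL l) = ν (posR l) then KLR.E k I n Q ν
           else
             evalQ (Q ((ν ∘ Equiv.swap (posL l) (posR l)) (posL l))
                 ((ν ∘ Equiv.swap (posL l) (posR l)) (posR l)))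
               (KLR.X k I n Q (posL l)) (KLR.X k I n Q (posR l))
               * KLR.E k I n Q (ν ∘ Equiv.swap (posL l) (posR l))) := by
        refine Finset.sum_congr rfl fun ν _ => ?_
        rw [mul_assoc, E_mul_phi, coef_mul_coef_E Q hQdiag l ν]
    _ = ∑ ν : Fin n → I,
          (evalQ (Q (ν (posL l)) (ν (posR l))) (KLR.X k I n Q (posL l))
              (KLR.X k I n Q (posR l)) * KLR.E k I n Q ν
            + (if ν (posL l) = ν (posR l) then KLR.E k I n Q ν else 0)) := by
        refine Fintype.sum_equiv (swapEquiv l) _ _ fun ν => ?_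
        simp only [swapEquiv, Equiv.coe_fn_mk]
        by_cases hν : ν (posL l) = ν (posR l)
        · rw [if_pos hν]
          simp only [comp_swap_eq_self l hν]
          rw [hν, hQdiag, evalQ_zero', zero_mul, zero_add, if_pos rfl]
        · have hν' : ¬ ((ν ∘ Equiv.swap (posL l) (posR l)) (posL l)
              = (ν ∘ Equiv.swap (posL l) (posR l)) (posR l)) := by
            rw [comp_swap_posL, comp_swap_posR]
            exact fun hh => hν hh.symm
          rw [if_neg hν]
          exact ((congrArg (_ + ·) (if_neg hν')).trans (add_zero _)).symm
    _ = _ := Finset.sum_add_distrib
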